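/- Let p_1, p_2, p_3 > 1 with 1/p_1 + 1/p_2 + 1/p_3 = 2, and set u_1 = (1,0), u_2 = (√((p_1−1)(p_2−1)), √(p_1 p_2 (p_3−1)/p_3)), u_3 = (−√((p_1−1)(p_3−1)), √(p_1 p_3 (p_2−1)/p_2)). Then (1/p_1)(u_1 ⊗ u_1) + (1/p_2)(u_2 ⊗ u_2) + (1/p_3)(u_3 ⊗ u_3) = Id_{R^2}. -/

import Mathlib

open Real

/-- Rank-one operator `u ⊗ u` on `ℝ²` applied to `v`: `(v·u) • u`. -/
noncomputable def tensorSq (u v : ℝ × ℝ) : ℝ × ℝ := (v.1 * u.1 + v.2 * u.2) • u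

theorem stmt9 (p₁ p₂ p₃ : ℝ) (hp1 : 1 < p₁) (hp2 : 1 < p₂) (hp3 : 1 < p₃)
    (hsum : 1 / p₁ + 1 / p₂ + 1 / p₃ = 2)
    (u₁ u₂ u₃ : ℝ × ℝ)
    (hu1 : u₁ = (1, 0))
    (hu2 : u₂ = (Real.sqrt ((p₁ - 1) * (p₂ - 1)), Real.sqrt (p₁ * p₂ * (p₃ - 1) / p₃)))
    (hu3 : u₃ = (-Real.sqrt ((p₁ - 1) * (p₃ - 1)), Real.sqrt (p₁ * p₃ * (p₂ - 1) / p₂))) :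
    ∀ v : ℝ × ℝ,
      (1 / p₁) • tensorSq u₁ v + (1 / p₂) • tensorSq u₂ v + (1 / p₃) • tensorSq u₃ v = v := by
  intro v
  have h1 : (0:ℝ) < p₁ := lt_trans one_pos hp1
  have h2 : (0:ℝ) < p₂ := lt_trans one_pos hp2
  have h3 : (0:ℝ) < p₃ := lt_trans one_pos hp3
  have ha1 : (0:ℝ) ≤ p₁ - 1 := by linarith
  have ha2 : (0:ℝ) ≤ p₂ - 1 := by linarith
  have ha3 : (0:ℝ) ≤ p₃ - 1 := by linarith
  set s12 := Real.sqrt ((p₁ - 1) * (p₂ - 1)) with hs12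
  set s13 := Real.sqrt ((p₁ - 1) * (p₃ - 1)) with hs13
  set q2 := Real.sqrt (p₁ * p₂ * (p₃ - 1) / p₃) with hq2
  set q3 := Real.sqrt (p₁ * p₃ * (p₂ - 1) / p₂) with hq3
  have hs12sq : s12 ^ 2 = (p₁ - 1) * (p₂ - 1) := Real.sq_sqrt (by positivity)
  have hs13sq : s13 ^ 2 = (p₁ - 1) * (p₃ - 1) := Real.sq_sqrt (by positivity)
  have hq2sq : q2 ^ 2 = p₁ * p₂ * (p₃ - 1) / p₃ := Real.sq_sqrt (by positivity)
  have hq3sq : q3 ^ 2 = p₁ * p₃ * (p₂ - 1) / p₂ := Real.sq_sqrt (by positivity)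
  -- cross term
  have hcross : (1 / p₂) * (s12 * q2) = (1 / p₃) * (s13 * q3) := by
    have hL : (1 / p₂) * (s12 * q2) =
        Real.sqrt ((1 / p₂)^2 * ((p₁ - 1) * (p₂ - 1)) * (p₁ * p₂ * (p₃ - 1) / p₃)) := by
      rw [Real.sqrt_mul (by positivity), Real.sqrt_mul (by positivity),
        Real.sqrt_sq (by positivity)]
      ring
    have hR : (1 / p₃) * (s13 * q3) =
        Real.sqrt ((1 / p₃)^2 * ((p₁ - 1) * (p₃ - 1)) * (p₁ * p₃ * (p₂ - 1) / p₂)) := by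
      rw [Real.sqrt_mul (by positivity), Real.sqrt_mul (by positivity),
        Real.sqrt_sq (by positivity)]
      ring
    rw [hL, hR]
    congr 1
    field_simp
  have hA : 1 / p₁ + (1 / p₂) * s12 ^ 2 + (1 / p₃) * s13 ^ 2 = 1 := by
    rw [hs12sq, hs13sq]
    field_simp
    field_simp at hsum
    nlinarith [hsum]
  have hC : (1 / p₂) * q2 ^ 2 + (1 / p₃) * q3 ^ 2 = 1 := by
    rw [hq2sq, hq3sq]
    field_simp
    field_simp at hsum
    nlinarith [hsum]
  subst hu1 hu2 hu3
  simp only [tensorSq, Prod.smul_mk, smul_eq_mul, Prod.mk_add_mk, Prod.ext_iff, ← hs12, ← hs13,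
    ← hq2, ← hq3]
  constructor
  · linear_combination v.1 * hA + v.2 * hcross
  · linear_combination v.2 * hC + v.1 * hcross
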